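/- Let d ≥ 2 and let G_1 : [n_1]×[r_1] → ℝ, G_k : [r_{k−1}]×[n_k]×[r_k] → ℝ for k = 2,…,d−1, and G_d : [r_{d−1}]×[n_d] → ℝ, with perturbations ΔG_k satisfying |||ΔG_k||| ≤ δ_k·|||G_k||| for all k. Let ε ∈ (0,1). If δ := max_{1 ≤ k ≤ d} δ_k ≤ ε/(3d), then ‖(G_1+ΔG_1)∘⋯∘(G_d+ΔG_d) − G_1∘⋯∘G_d‖_∞ / (|||G_1|||⋯|||G_d|||) ≤ ε. -/

import Mathlib

open scoped BigOperators
open Matrix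

/-- Indices `(x_0, …, x_{k-1})` of the first `k` variables (sizes given by `n`). -/
abbrev PreIdx (n : ℕ → ℕ) (k : ℕ) := ∀ i : Fin k, Fin (n i)

/-- Indices `(x_k, …, x_{d-1})` of the variables with position `≥ k`. -/
abbrev SufIdx (n : ℕ → ℕ) (d k : ℕ) := ∀ i : {i : Fin d // k ≤ (i : ℕ)}, Fin (n i)

/-- Indices of the variables with position in the window `[a, b)`. -/
abbrev MidIdx (n : ℕ → ℕ) (d a b : ℕ) :=
  ∀ i : {i : Fin d // a ≤ (i : ℕ) ∧ (i : ℕ) < b}, Fin (n i)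

/-- Glue a prefix index and a suffix index into a full index. -/
def glue {n : ℕ → ℕ} {d k : ℕ} (x : PreIdx n k) (y : SufIdx n d k) : PreIdx n d :=
  fun i => if h : (i : ℕ) < k then x ⟨i, h⟩ else y ⟨i, Nat.le_of_not_lt h⟩

/-- The `k`-th unfolding matrix of a `d`-dimensional tensor `p`. -/
def unfold {n : ℕ → ℕ} {d : ℕ} (p : PreIdx n d → ℝ) (k : ℕ) :
    Matrix (PreIdx n k) (SufIdx n d k) ℝ :=
  Matrix.of fun x y => p (glue x y)

/-- Column space of a matrix: span of its columns. -/
noncomputable def colSpace {R C : Type*} (M : Matrix R C ℝ) : Submodule ℝ (R → ℝ) :=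
  Submodule.span ℝ (Set.range fun c => fun r => M r c)

/-- Row space of a matrix: span of its rows. -/
noncomputable def rowSpace {R C : Type*} (M : Matrix R C ℝ) : Submodule ℝ (C → ℝ) :=
  Submodule.span ℝ (Set.range fun r => fun c => M r c)

/-- Rank of a matrix (dimension of its column space). -/
noncomputable def mrank {R C : Type*} (M : Matrix R C ℝ) : ℕ :=
  Module.finrank ℝ ↥(colSpace M)

/-- Restriction of a prefix index to the first `k` variables. -/
def takePre {n : ℕ → ℕ} {k : ℕ} (x : PreIdx n (k + 1)) : PreIdx n k :=
  fun i => x ⟨i, Nat.lt_succ_of_lt i.isLt⟩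

/-- Extend a prefix index by one more variable. -/
def snoc' {n : ℕ → ℕ} {k : ℕ} (z : PreIdx n k) (a : Fin (n k)) : PreIdx n (k + 1) :=
  fun i =>
    if h : (i : ℕ) < k then z ⟨i, h⟩
    else Fin.cast (congrArg n (by have := i.isLt; omega : k = (i : ℕ))) a

/-- A family of tensor-train cores: core `k` has shape `r k × n k × r (k+1)`.
(The first and last cores carry a dummy index of size `r 0 = 1`, `r d = 1`.) -/
abbrev CoreType (n r : ℕ → ℕ) (d : ℕ) :=
  ∀ k : Fin d, Fin (r k) → Fin (n k) → Fin (r ((k : ℕ) + 1)) → ℝ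

/-- Partial contraction of the first `k` cores. -/
noncomputable def ttPrefixF {d : ℕ} {n r : ℕ → ℕ} (G : CoreType n r d) :
    (k : ℕ) → k ≤ d → PreIdx n k → Fin (r 0) → Fin (r k) → ℝ
  | 0, _, _, a, b => if (a : ℕ) = (b : ℕ) then 1 else 0
  | k + 1, h, x, a, b =>
      ∑ c : Fin (r k),
        ttPrefixF G k (Nat.le_of_succ_le h) (takePre x) a c * G ⟨k, h⟩ c (x (Fin.last k)) b

/-- Full contraction `G_1 ∘ ⋯ ∘ G_d` of a family of tensor-train cores. -/
noncomputable def ttContract {d : ℕ} {n r : ℕ → ℕ} (G : CoreType n r d)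
    (x : PreIdx n d) : ℝ :=
  ∑ a : Fin (r 0), ∑ b : Fin (r d), ttPrefixF G d le_rfl x a b

/-- The recursively contracted left sketch functions `S_k` built from blocks `s_k`. -/
noncomputable def leftSketch {n m : ℕ → ℕ}
    (s : ∀ k : ℕ, Fin (m (k + 1)) → Fin (n k) → Fin (m k) → ℝ) :
    (k : ℕ) → Fin (m k) → PreIdx n k → ℝ
  | 0, _, _ => 1
  | k + 1, β, x => ∑ c : Fin (m k), s k β (x (Fin.last k)) c * leftSketch s k c (takePre x)

/-- The right-sketched unfolding `Φ̄_k = p ∘ T_{k+1}`. -/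
noncomputable def rightSketched {n : ℕ → ℕ} {d : ℕ} (p : PreIdx n d → ℝ)
    {ℓ : ℕ → ℕ} (T : ∀ k : ℕ, SufIdx n d k → Fin (ℓ k) → ℝ) (k : ℕ)
    (x : PreIdx n k) (γ : Fin (ℓ k)) : ℝ :=
  ∑ y : SufIdx n d k, p (glue x y) * T k y γ

/-- The doubly sketched tensor `Φ̃_{j+1} = S_j ∘ Φ̄_{j+1}`. -/
noncomputable def tildePhi {n : ℕ → ℕ} {d : ℕ} {ℓ m : ℕ → ℕ} (p : PreIdx n d → ℝ)
    (T : ∀ k : ℕ, SufIdx n d k → Fin (ℓ k) → ℝ)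
    (s : ∀ k : ℕ, Fin (m (k + 1)) → Fin (n k) → Fin (m k) → ℝ)
    (j : ℕ) (β : Fin (m j)) (xj : Fin (n j)) (γ : Fin (ℓ (j + 1))) : ℝ :=
  ∑ z : PreIdx n j, leftSketch s j β z * rightSketched p T (j + 1) (snoc' z xj) γ

/-- Marginal of `p` on the window of variables `[a, b)`. -/
noncomputable def winMarg {n : ℕ → ℕ} {d : ℕ} (p : PreIdx n d → ℝ) (a b : ℕ)
    (y : MidIdx n d a b) : ℝ :=
  ∑ z : ∀ i : {i : Fin d // (i : ℕ) < a ∨ b ≤ (i : ℕ)}, Fin (n i),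
    p fun i =>
      if h : a ≤ (i : ℕ) ∧ (i : ℕ) < b then y ⟨i, h⟩ else z ⟨i, by omega⟩

/-- Marginal of `p` on the window `[a, b)`, viewed as a matrix with rows indexed by
variables in `[a, c)` and columns by variables in `[c, b)`. -/
noncomputable def winMatrix {n : ℕ → ℕ} {d : ℕ} (p : PreIdx n d → ℝ) (a c b : ℕ) :
    Matrix (MidIdx n d a c) (MidIdx n d c b) ℝ :=
  Matrix.of fun x y =>
    ∑ z : ∀ i : {i : Fin d // (i : ℕ) < a ∨ b ≤ (i : ℕ)}, Fin (n i),
      p fun i =>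
        if h1 : a ≤ (i : ℕ) ∧ (i : ℕ) < c then x ⟨i, h1⟩
        else if h2 : c ≤ (i : ℕ) ∧ (i : ℕ) < b then y ⟨i, h2⟩
        else z ⟨i, by omega⟩

/-- A (first-order) discrete Markov model: a probability density such that for all
`2 ≤ k ≤ d - 1` (1-based), `p(x) · p_k(x_k) = p_{1:k}(x_{1:k}) · p_{k:d}(x_{k:d})`. -/
def IsMarkov {n : ℕ → ℕ} {d : ℕ} (p : PreIdx n d → ℝ) : Prop :=
  (∀ x, 0 ≤ p x) ∧ (∑ x : PreIdx n d, p x) = 1 ∧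
    ∀ k : ℕ, 2 ≤ k → k ≤ d - 1 → ∀ x : PreIdx n d,
      p x * winMarg p (k - 1) k (fun i => x i.1) =
        winMarg p 0 k (fun i => x i.1) * winMarg p (k - 1) d (fun i => x i.1)

/-- An order-`m` discrete Markov model. -/
def IsMarkovOrder {n : ℕ → ℕ} {d : ℕ} (m : ℕ) (p : PreIdx n d → ℝ) : Prop :=
  (∀ x, 0 ≤ p x) ∧ (∑ x : PreIdx n d, p x) = 1 ∧
    ∀ k : ℕ, m + 1 ≤ k → k ≤ d - 1 → ∀ x : PreIdx n d,
      p x * winMarg p (k - m) k (fun i => x i.1) =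
        winMarg p 0 k (fun i => x i.1) * winMarg p (k - m) d (fun i => x i.1)

/-- Spectral norm (ℓ² → ℓ² operator norm) of a matrix. -/
noncomputable def specNorm {R C : Type*} [Fintype R] [Fintype C] [DecidableEq C]
    (M : Matrix R C ℝ) : ℝ :=
  ‖LinearMap.toContinuousLinearMap (Matrix.toEuclideanLin M)‖

/-- Moore–Penrose pseudoinverse of a full-column-rank matrix, `A⁺ = (AᵀA)⁻¹Aᵀ`. -/
noncomputable def pinv {m n : ℕ} (A : Matrix (Fin m) (Fin n) ℝ) :
    Matrix (Fin n) (Fin m) ℝ :=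
  (Aᵀ * A)⁻¹ * Aᵀ

/-- The norm `|||G|||`: max over the middle index of the spectral norm of the slices. -/
noncomputable def tnorm {a b c : ℕ} (G : Fin a → Fin b → Fin c → ℝ) : ℝ :=
  ⨆ i : Fin b, specNorm (Matrix.of fun x y => G x i y)

/-- Supremum norm of a 3-tensor. -/
noncomputable def supNorm3 {a b c : ℕ} (G : Fin a → Fin b → Fin c → ℝ) : ℝ :=
  ⨆ q : Fin a × Fin b × Fin c, |G q.1 q.2.1 q.2.2|

/-- Supremum norm of a `d`-dimensional tensor. -/
noncomputable def supNormF {n : ℕ → ℕ} {d : ℕ} (f : PreIdx n d → ℝ) : ℝ :=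
  ⨆ x : PreIdx n d, |f x|


section PerturbationAux

open scoped Matrix.Norms.L2Operator

variable {R C S : Type*} [Fintype R] [Fintype C] [Fintype S] [DecidableEq C] [DecidableEq S]

lemma specNorm_eq' (M : Matrix R C ℝ) : specNorm M = ‖M‖ := rfl

lemma specNorm_nonneg' (M : Matrix R C ℝ) : 0 ≤ specNorm M := by
  rw [specNorm_eq']; exact norm_nonneg _

lemma specNorm_zero' : specNorm (0 : Matrix R C ℝ) = 0 := by
  rw [specNorm_eq']; exact norm_zero

lemma specNorm_mul_le' (A : Matrix R C ℝ) (B : Matrix C S ℝ) :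
    specNorm (A * B) ≤ specNorm A * specNorm B := by
  simp only [specNorm_eq']; exact Matrix.l2_opNorm_mul A B

lemma specNorm_add_le' (A B : Matrix R C ℝ) : specNorm (A + B) ≤ specNorm A + specNorm B := by
  simp only [specNorm_eq']; exact norm_add_le A B

lemma specNorm_one_le' [DecidableEq R] : specNorm (1 : Matrix R R ℝ) ≤ 1 := by
  rw [specNorm_eq', Matrix.l2_opNorm_def]
  refine ContinuousLinearMap.opNorm_le_bound _ zero_le_one fun x => ?_
  rw [one_mul]
  have h : Matrix.toEuclideanLin (1 : Matrix R R ℝ) x = x := by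
    rw [Matrix.toEuclideanLin_apply]
    simp
  simp only [LinearEquiv.trans_apply, LinearMap.coe_toContinuousLinearMap', h, le_refl]

lemma euclid_comp_le (v : EuclideanSpace ℝ R) (a : R) : |v a| ≤ ‖v‖ := by
  rw [EuclideanSpace.norm_eq]
  calc |v a| = Real.sqrt (‖v a‖ ^ 2) := by
        rw [Real.sqrt_sq_eq_abs, Real.norm_eq_abs, abs_abs]
    _ ≤ _ := Real.sqrt_le_sqrt
        (Finset.single_le_sum (fun i _ => sq_nonneg ‖v i‖) (Finset.mem_univ a))

lemma abs_entry_le_specNorm' (M : Matrix R C ℝ) (a : R) (b : C) : |M a b| ≤ specNorm M := by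
  have h1 : M a b = (Matrix.toEuclideanLin M (EuclideanSpace.single b 1)) a := by
    rw [Matrix.toEuclideanLin_apply]
    simp [Matrix.mulVec, dotProduct, EuclideanSpace.single_apply, mul_ite]
  rw [h1]
  calc |(Matrix.toEuclideanLin M (EuclideanSpace.single b 1)) a|
      ≤ ‖Matrix.toEuclideanLin M (EuclideanSpace.single b 1)‖ := euclid_comp_le _ a
    _ ≤ specNorm M * ‖EuclideanSpace.single b (1:ℝ)‖ :=
        (LinearMap.toContinuousLinearMap (Matrix.toEuclideanLin M)).le_opNorm _
    _ = specNorm M := by rw [EuclideanSpace.norm_single]; simp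

end PerturbationAux

lemma tnorm_nonneg' {a b c : ℕ} (G : Fin a → Fin b → Fin c → ℝ) : 0 ≤ tnorm G :=
  Real.iSup_nonneg fun _ => specNorm_nonneg' _

lemma slice_le_tnorm' {a b c : ℕ} (G : Fin a → Fin b → Fin c → ℝ) (i : Fin b) :
    specNorm (Matrix.of fun x y => G x i y) ≤ tnorm G :=
  le_ciSup (f := fun i => specNorm (Matrix.of fun x y => G x i y))
    (Set.Finite.bddAbove (Set.finite_range _)) i

lemma tt_key {d : ℕ} {n r : ℕ → ℕ} (G H : CoreType n r d) (t u : ℕ → ℝ)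
    (ht : ∀ i, 0 ≤ t i) (hu : ∀ i, 1 ≤ u i)
    (hG : ∀ (k : Fin d) (i : Fin (n k)),
      specNorm (Matrix.of fun a b => G k a i b) ≤ t k)
    (hH : ∀ (k : Fin d) (i : Fin (n k)),
      specNorm (Matrix.of fun a b => H k a i b - G k a i b) ≤ (u k - 1) * t k) :
    ∀ (k : ℕ) (hk : k ≤ d) (x : PreIdx n k),
      specNorm (Matrix.of fun a b => ttPrefixF G k hk x a b) ≤ ∏ i ∈ Finset.range k, t i ∧
      specNorm (Matrix.of fun a b => ttPrefixF H k hk x a b - ttPrefixF G k hk x a b)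
        ≤ (∏ i ∈ Finset.range k, u i - 1) * ∏ i ∈ Finset.range k, t i := by
  intro k
  induction k with
  | zero =>
    intro hk x
    have hid : (Matrix.of fun a b => ttPrefixF G 0 hk x a b)
        = (1 : Matrix (Fin (r 0)) (Fin (r 0)) ℝ) := by
      ext a b
      simp [ttPrefixF, Matrix.one_apply, Fin.val_eq_val]
    have hid2 : (Matrix.of fun a b => ttPrefixF H 0 hk x a b - ttPrefixF G 0 hk x a b)
        = (0 : Matrix (Fin (r 0)) (Fin (r 0)) ℝ) := by
      ext a b; simp [ttPrefixF]
    constructor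
    · rw [hid]; simpa using specNorm_one_le'
    · rw [hid2, specNorm_zero']; simp
  | succ k ih =>
    intro hk x
    have hk' : k ≤ d := Nat.le_of_succ_le hk
    obtain ⟨ihG, ihD⟩ := ih hk' (takePre x)
    set i := x (Fin.last k) with hi
    set SG : Matrix (Fin (r k)) (Fin (r (k+1))) ℝ :=
      Matrix.of fun c b => G ⟨k, hk⟩ c i b with hSG
    set SH : Matrix (Fin (r k)) (Fin (r (k+1))) ℝ :=
      Matrix.of fun c b => H ⟨k, hk⟩ c i b with hSH
    set MG : Matrix (Fin (r 0)) (Fin (r k)) ℝ :=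
      Matrix.of fun a b => ttPrefixF G k hk' (takePre x) a b with hMG
    set MH : Matrix (Fin (r 0)) (Fin (r k)) ℝ :=
      Matrix.of fun a b => ttPrefixF H k hk' (takePre x) a b with hMH
    have heqG : (Matrix.of fun a b => ttPrefixF G (k+1) hk x a b) = MG * SG := by
      ext a b; rw [Matrix.mul_apply]; rfl
    have heqH : (Matrix.of fun a b => ttPrefixF H (k+1) hk x a b) = MH * SH := by
      ext a b; rw [Matrix.mul_apply]; rfl
    have hSGle : specNorm SG ≤ t k := hG ⟨k, hk⟩ i
    have hSDle : specNorm (SH - SG) ≤ (u k - 1) * t k := hH ⟨k, hk⟩ i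
    have hSHle : specNorm SH ≤ u k * t k := by
      have h := specNorm_add_le' SG (SH - SG)
      have e : SG + (SH - SG) = SH := by abel
      rw [e] at h
      have : specNorm SH ≤ t k + (u k - 1) * t k :=
        le_trans h (add_le_add hSGle hSDle)
      linarith
    have hmut : 0 ≤ u k * t k := mul_nonneg (le_trans zero_le_one (hu k)) (ht k)
    have hprodu : 1 ≤ ∏ i ∈ Finset.range k, u i := by
      have := Finset.prod_le_prod (s := Finset.range k) (f := fun _ => (1:ℝ)) (g := u)
        (fun i _ => zero_le_one) (fun i _ => hu i)
      simpa using this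
    have hprodt : 0 ≤ ∏ i ∈ Finset.range k, t i :=
      Finset.prod_nonneg fun i _ => ht i
    constructor
    · rw [heqG, Finset.prod_range_succ]
      calc specNorm (MG * SG) ≤ specNorm MG * specNorm SG := specNorm_mul_le' _ _
        _ ≤ (∏ i ∈ Finset.range k, t i) * t k :=
            mul_le_mul ihG hSGle (specNorm_nonneg' _) hprodt
    · have hsplit :
          (Matrix.of fun a b => ttPrefixF H (k+1) hk x a b - ttPrefixF G (k+1) hk x a b)
            = (MH - MG) * SH + MG * (SH - SG) := by
        have h0 : (Matrix.of fun a b => ttPrefixF H (k+1) hk x a b - ttPrefixF G (k+1) hk x a b)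
            = MH * SH - MG * SG := by
          ext a b
          have e1 : ttPrefixF H (k+1) hk x a b = (MH * SH) a b := by rw [← heqH]; rfl
          have e2 : ttPrefixF G (k+1) hk x a b = (MG * SG) a b := by rw [← heqG]; rfl
          simp only [Matrix.of_apply, Matrix.sub_apply, e1, e2]
        rw [h0, Matrix.sub_mul, Matrix.mul_sub]; abel
      rw [hsplit, Finset.prod_range_succ, Finset.prod_range_succ]
      calc specNorm ((MH - MG) * SH + MG * (SH - SG))
          ≤ specNorm ((MH - MG) * SH) + specNorm (MG * (SH - SG)) := specNorm_add_le' _ _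
        _ ≤ specNorm (MH - MG) * specNorm SH + specNorm MG * specNorm (SH - SG) :=
            add_le_add (specNorm_mul_le' _ _) (specNorm_mul_le' _ _)
        _ ≤ ((∏ i ∈ Finset.range k, u i - 1) * ∏ i ∈ Finset.range k, t i) * (u k * t k)
            + (∏ i ∈ Finset.range k, t i) * ((u k - 1) * t k) := by
            refine add_le_add (mul_le_mul ihD hSHle (specNorm_nonneg' _) ?_)
              (mul_le_mul ihG hSDle (specNorm_nonneg' _) hprodt)
            exact mul_nonneg (by linarith) hprodt
        _ = ((∏ i ∈ Finset.range k, u i) * u k - 1) * ((∏ i ∈ Finset.range k, t i) * t k) := by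
            ring

lemma bern_aux : ∀ (m : ℕ) (x : ℝ), 0 ≤ x → (1 + x) ^ m * (1 - m * x) ≤ 1 := by
  intro m
  induction m with
  | zero => intro x hx; norm_num
  | succ m ih =>
    intro x hx
    by_cases h : 1 - ((m : ℝ) + 1) * x ≤ 0
    · have : (1 + x) ^ (m + 1) * (1 - ((m:ℕ)+1 : ℕ) * x) ≤ 0 := by
        push_cast
        exact mul_nonpos_of_nonneg_of_nonpos (pow_nonneg (by linarith) _) h
      calc (1 + x) ^ (m + 1) * (1 - ((m+1 : ℕ) : ℝ) * x) ≤ 0 := by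
            push_cast at this ⊢; linarith [this]
        _ ≤ 1 := zero_le_one
    · push_neg at h
      have hp : (0:ℝ) ≤ (1 + x) ^ m := pow_nonneg (by linarith) _
      have key : (1 + x) * (1 - ((m:ℝ) + 1) * x) ≤ 1 - (m:ℝ) * x := by
        nlinarith [mul_nonneg (Nat.cast_nonneg m : (0:ℝ) ≤ m) (sq_nonneg x), sq_nonneg x]
      calc (1 + x) ^ (m + 1) * (1 - ((m+1 : ℕ) : ℝ) * x)
          = (1 + x) ^ m * ((1 + x) * (1 - ((m:ℝ) + 1) * x)) := by push_cast; ring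
        _ ≤ (1 + x) ^ m * (1 - (m:ℝ) * x) := by
            apply mul_le_mul_of_nonneg_left key hp
        _ ≤ 1 := ih x hx

/-- Corollary: relative perturbation bound for the contraction.
If `|||ΔG_k||| ≤ δ_k |||G_k|||` for all `k` with `δ_k > 0`, `ε ∈ (0,1)`, and every
`δ_k ≤ ε / (3d)` (i.e. `max_k δ_k ≤ ε/(3d)`), then
`‖(G_1+ΔG_1)∘⋯∘(G_d+ΔG_d) − G_1∘⋯∘G_d‖_∞ / (|||G_1|||⋯|||G_d|||) ≤ ε`.
(Here `d = d₀ + 2 ≥ 2`, with dummy boundary ranks `r 0 = r d = 1`.) -/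
theorem contraction_relative_perturbation_bound
    (d₀ : ℕ) (n r : ℕ → ℕ) (hr0 : r 0 = 1) (hrd : r (d₀ + 2) = 1)
    (G ΔG : CoreType n r (d₀ + 2)) (δ : Fin (d₀ + 2) → ℝ)
    (hδpos : ∀ k, 0 < δ k)
    (hpert : ∀ k, tnorm (ΔG k) ≤ δ k * tnorm (G k))
    (ε : ℝ) (hε0 : 0 < ε) (hε1 : ε < 1)
    (hδε : ∀ k, δ k ≤ ε / (3 * ((d₀ : ℝ) + 2))) :
    supNormF (fun x => ttContract (fun k => G k + ΔG k) x - ttContract G x) /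
        (∏ k, tnorm (G k)) ≤ ε := by
  classical
  set H : CoreType n r (d₀ + 2) := fun k => G k + ΔG k with hHdef
  set c : ℝ := ε / (3 * ((d₀ : ℝ) + 2)) with hc
  have hc0 : 0 ≤ c := by positivity
  set t : ℕ → ℝ := fun i => if h : i < d₀ + 2 then tnorm (G ⟨i, h⟩) else 1 with htdef
  set u : ℕ → ℝ := fun i => if h : i < d₀ + 2 then 1 + δ ⟨i, h⟩ else 1 with hudef
  have ht : ∀ i, 0 ≤ t i := by
    intro i; simp only [htdef]; split_ifs with h
    · exact tnorm_nonneg' _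
    · exact zero_le_one
  have hu : ∀ i, 1 ≤ u i := by
    intro i; simp only [hudef]; split_ifs with h
    · linarith [hδpos ⟨i, h⟩]
    · exact le_refl 1
  have htk : ∀ k : Fin (d₀ + 2), t k = tnorm (G k) := by
    intro k; simp only [htdef]; rw [dif_pos k.isLt]
  have huk : ∀ k : Fin (d₀ + 2), u k = 1 + δ k := by
    intro k; simp only [hudef]; rw [dif_pos k.isLt]
  have hGs : ∀ (k : Fin (d₀ + 2)) (i : Fin (n k)),
      specNorm (Matrix.of fun a b => G k a i b) ≤ t k := by
    intro k i; rw [htk]; exact slice_le_tnorm' _ i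
  have hHs : ∀ (k : Fin (d₀ + 2)) (i : Fin (n k)),
      specNorm (Matrix.of fun a b => H k a i b - G k a i b) ≤ (u k - 1) * t k := by
    intro k i
    have he : (Matrix.of fun a b => H k a i b - G k a i b)
        = (Matrix.of fun a b => ΔG k a i b) := by
      ext a b; simp [hHdef]
    rw [he, htk, huk]
    calc specNorm (Matrix.of fun a b => ΔG k a i b) ≤ tnorm (ΔG k) := slice_le_tnorm' _ i
      _ ≤ δ k * tnorm (G k) := hpert k
      _ = (1 + δ k - 1) * tnorm (G k) := by ring
  have key := tt_key G H t u ht hu hGs hHs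
  set T : ℝ := ∏ i ∈ Finset.range (d₀ + 2), t i with hT
  set U : ℝ := ∏ i ∈ Finset.range (d₀ + 2), u i with hU
  have hT0 : 0 ≤ T := Finset.prod_nonneg fun i _ => ht i
  -- the product of tnorms equals T
  have hTprod : (∏ k : Fin (d₀ + 2), tnorm (G k)) = T := by
    rw [hT, ← Fin.prod_univ_eq_prod_range]
    exact Finset.prod_congr rfl fun k _ => (htk k).symm
  -- numeric bound on U
  have hUc : U ≤ (1 + c) ^ (d₀ + 2) := by
    have h1 : U ≤ ∏ _i ∈ Finset.range (d₀ + 2), (1 + c) := by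
      refine Finset.prod_le_prod (fun i _ => le_trans zero_le_one (hu i)) ?_
      intro i hi
      rw [Finset.mem_range] at hi
      simp only [hudef]; rw [dif_pos hi]
      have := hδε ⟨i, hi⟩
      linarith [this]
    simpa using h1
  have hcast : ((d₀ + 2 : ℕ) : ℝ) * c = ε / 3 := by
    have hne : (3 : ℝ) * ((d₀ : ℝ) + 2) ≠ 0 := by positivity
    rw [hc]; push_cast; field_simp
  have hbU : (1 + c) ^ (d₀ + 2) * (1 - ε / 3) ≤ 1 := by
    have := bern_aux (d₀ + 2) c hc0
    rw [hcast] at this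
    exact this
  have hU1 : U * (1 - ε / 3) ≤ 1 := by
    have h3 : (0:ℝ) ≤ 1 - ε / 3 := by linarith
    exact le_trans (mul_le_mul_of_nonneg_right hUc h3) hbU
  have hUe : U - 1 ≤ ε := by nlinarith [hU1, hε0, hε1]
  -- pointwise bound
  have hpoint : ∀ x : PreIdx n (d₀ + 2),
      |ttContract H x - ttContract G x| ≤ ε * T := by
    intro x
    obtain ⟨-, hD⟩ := key (d₀ + 2) le_rfl x
    set D : Matrix (Fin (r 0)) (Fin (r (d₀ + 2))) ℝ :=
      Matrix.of fun a b => ttPrefixF H (d₀ + 2) le_rfl x a b -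
        ttPrefixF G (d₀ + 2) le_rfl x a b with hDdef
    have hdiff : ttContract H x - ttContract G x
        = ∑ a : Fin (r 0), ∑ b : Fin (r (d₀ + 2)), D a b := by
      simp [ttContract, Finset.sum_sub_distrib, hDdef]
    rw [hdiff]
    calc |∑ a : Fin (r 0), ∑ b : Fin (r (d₀ + 2)), D a b|
        ≤ ∑ a : Fin (r 0), ∑ b : Fin (r (d₀ + 2)), |D a b| :=
          le_trans (Finset.abs_sum_le_sum_abs _ _)
            (Finset.sum_le_sum fun a _ => Finset.abs_sum_le_sum_abs _ _)
      _ ≤ ∑ _a : Fin (r 0), ∑ _b : Fin (r (d₀ + 2)), specNorm D :=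
          Finset.sum_le_sum fun a _ => Finset.sum_le_sum fun b _ =>
            abs_entry_le_specNorm' D a b
      _ = specNorm D := by
          simp [Finset.sum_const, Finset.card_univ, hr0, hrd]
      _ ≤ (U - 1) * T := hD
      _ ≤ ε * T := mul_le_mul_of_nonneg_right hUe hT0
  -- assemble
  rw [hTprod]
  have hsup : supNormF (fun x => ttContract H x - ttContract G x) ≤ ε * T := by
    unfold supNormF
    exact Real.iSup_le (fun x => hpoint x) (mul_nonneg hε0.le hT0)
  rcases eq_or_lt_of_le hT0 with h | h
  · rw [← h, div_zero]; exact hε0.le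
  · rw [div_le_iff₀ h]
    exact hsup
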